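/- Let (P, ≤) be a preordered set with a compatible abelian group structure, R a principal ideal domain, and M a graded projective P-graded R[U₀]-module. Then every decomposable homogeneous element can be written in terms of indecomposable elements: for every k ∈ P and every x ∈ D_k there exist finitely many degrees ℓ_1, …, ℓ_m ∈ P with ℓ_t < k and indecomposable elements x_t ∈ M_{ℓ_t} (t = 1, …, m) such that x = Σ_{t=1}^m t^{k−ℓ_t} x_t. -/

import Mathlib

open scoped DirectSum

variable (P : Type) [AddCommGroup P] [Preorder P]
  [CovariantClass P P (· + ·) (· ≤ ·)] [DecidableEq P]
variable (R : Type) [CommRing R]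

/-- The monoid algebra `R[U₀]` on the submonoid `U₀` of nonnegative elements of `P`. -/
abbrev PersAlg : Type := AddMonoidAlgebra R ↥(AddSubmonoid.nonneg P)

/-- The monomial `t^p ∈ R[U₀]` for `p ≥ 0` (and `0` otherwise, a junk value). -/
noncomputable def tp (p : P) : PersAlg P R :=
  letI := Classical.dec (0 ≤ p)
  if h : 0 ≤ p then AddMonoidAlgebra.single (⟨p, h⟩ : ↥(AddSubmonoid.nonneg P)) 1 else 0

/-- A `P`-graded `R[U₀]`-module (persistence module): an `R[U₀]`-module together with an
internal direct sum decomposition `M = ⊕_{a ∈ P} M_a` into `R`-submodules such that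
`t^s • M_a ⊆ M_{a+s}` for all `s ≥ 0`. -/
structure PersMod : Type 1 where
  carrier : Type
  [isAddCommGroup : AddCommGroup carrier]
  [isModuleR : Module R carrier]
  [isModule : Module (PersAlg P R) carrier]
  [isTower : IsScalarTower R (PersAlg P R) carrier]
  deg : P → Submodule R carrier
  isInternal : DirectSum.IsInternal deg
  tp_smul_mem : ∀ (s : P), 0 ≤ s → ∀ (a : P) (x : carrier),
    x ∈ deg a → tp P R s • x ∈ deg (a + s)

attribute [instance] PersMod.isAddCommGroup PersMod.isModuleR PersMod.isModule PersMod.isTower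

/-- Scalar multiplication by a fixed element of `R[U₀]`, as an `R`-linear map. -/
noncomputable def smulMapR (M : PersMod P R) (a : PersAlg P R) : M.carrier →ₗ[R] M.carrier :=
  (LinearMap.lsmul (PersAlg P R) M.carrier a).restrictScalars R

/-- `D_r ⊆ M_r`, the sum of the images of all `M_q`, `q < r`, under `t^{r-q}`. -/
noncomputable def Dsub (M : PersMod P R) (r : P) : Submodule R M.carrier :=
  ⨆ q : {q : P // q < r}, Submodule.map (smulMapR P R M (tp P R (r - q.1))) (M.deg q.1)

/-- `M` is graded free: it admits an `R[U₀]`-basis of homogeneous elements. -/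
def IsGradedFree (M : PersMod P R) : Prop :=
  ∃ (Λ : Type) (d : Λ → P) (b : Module.Basis Λ (PersAlg P R) M.carrier),
    ∀ η, b η ∈ M.deg (d η)

/-- `M` is graded projective: it is a graded direct summand of a graded free module. -/
def IsGradedProjective (M : PersMod P R) : Prop :=
  ∃ F : PersMod P R, IsGradedFree P R F ∧
    ∃ (ι : M.carrier →ₗ[PersAlg P R] F.carrier) (π : F.carrier →ₗ[PersAlg P R] M.carrier),
      (∀ (a : P), ∀ x ∈ M.deg a, ι x ∈ F.deg a) ∧
      (∀ (a : P), ∀ x ∈ F.deg a, π x ∈ M.deg a) ∧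
      π.comp ι = LinearMap.id

/-- An `R[U₀]`-submodule `S` of a graded module `F` is graded if it is the sum of its
homogeneous parts `S ∩ F_a`. -/
def IsGradedSubmodule (F : PersMod P R) (S : Submodule (PersAlg P R) F.carrier) : Prop :=
  S.restrictScalars R = ⨆ a : P, (S.restrictScalars R ⊓ F.deg a)

/-- For a graded submodule `S ⊆ F`, the submodule `D_r` of sums of images of the homogeneous
pieces `S ∩ F_q`, `q < r`, under `t^{r-q}`. -/
noncomputable def DsubOf (F : PersMod P R) (S : Submodule (PersAlg P R) F.carrier) (r : P) :
    Submodule R F.carrier :=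
  ⨆ q : {q : P // q < r},
    Submodule.map (smulMapR P R F (tp P R (r - q.1))) (S.restrictScalars R ⊓ F.deg q.1)


namespace DecompAux
set_option linter.unusedSectionVars false

variable {P : Type} [AddCommGroup P] [Preorder P]
  [CovariantClass P P (· + ·) (· ≤ ·)] [DecidableEq P]
variable {R : Type} [CommRing R]

theorem sub_nonneg_of_le {a b : P} (h : b ≤ a) : 0 ≤ a - b := by
  have := add_le_add_left h (-b)
  simpa [neg_add_eq_sub] using this

theorem le_of_sub_nonneg {a b : P} (h : 0 ≤ a - b) : b ≤ a := by
  have := add_le_add_left h b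
  simpa using this

theorem tp_of_nonneg {p : P} (h : 0 ≤ p) :
    tp P R p = AddMonoidAlgebra.single (⟨p, h⟩ : ↥(AddSubmonoid.nonneg P)) 1 := by
  simp only [tp]
  rw [dif_pos h]

theorem tp_of_not_nonneg {p : P} (h : ¬ 0 ≤ p) : tp P R p = 0 := by
  simp only [tp]
  rw [dif_neg h]

theorem tp_zero : tp P R 0 = 1 := by
  rw [tp_of_nonneg le_rfl, AddMonoidAlgebra.one_def]
  rfl

theorem tp_mul {a b : P} (ha : 0 ≤ a) (hb : 0 ≤ b) :
    tp P R a * tp P R b = tp P R (a + b) := by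
  have hab : (0:P) ≤ a + b := by
    have := add_le_add_left hb a
    have h2 : a + 0 ≤ a + b := by rw [add_comm a 0, add_comm a b]; exact this
    have h3 : a ≤ a + b := by simpa using h2
    exact le_trans ha h3
  rw [tp_of_nonneg (R := R) ha, tp_of_nonneg (R := R) hb, tp_of_nonneg (R := R) hab,
    AddMonoidAlgebra.single_mul_single]
  exact congrArg₂ AddMonoidAlgebra.single (Subtype.ext rfl) (one_mul 1)

theorem tp_single (s : ↥(AddSubmonoid.nonneg P)) (r : R) :
    AddMonoidAlgebra.single s r = r • tp P R s.1 := by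
  rw [tp_of_nonneg (AddSubmonoid.mem_nonneg.mp s.2)]
  rw [AddMonoidAlgebra.smul_single']
  exact (congrArg₂ AddMonoidAlgebra.single (Subtype.ext rfl) (mul_one r)).symm

end DecompAux

namespace DecompAux2
set_option linter.unusedSectionVars false
open DecompAux

variable {P : Type} [AddCommGroup P] [Preorder P]
  [CovariantClass P P (· + ·) (· ≤ ·)] [DecidableEq P]
variable {R : Type} [CommRing R]

variable (F : PersMod P R) {Λ : Type} (bb : Module.Basis Λ (PersAlg P R) F.carrier)

/-- The coordinate map at a basis index, as an `R`-linear map. -/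
noncomputable def crd (η : Λ) : F.carrier →ₗ[R] PersAlg P R :=
  ((Finsupp.lapply η).comp bb.repr.toLinearMap).restrictScalars R

@[simp] theorem crd_apply (η : Λ) (v : F.carrier) : crd F bb η v = bb.repr v η := rfl

theorem coord_homog (d : Λ → P) (hb : ∀ η, bb η ∈ F.deg (d η))
    {p : P} {v : F.carrier} (hv : v ∈ F.deg p) (η : Λ) :
    ∃ r : R, bb.repr v η = r • tp P R (p - d η) := by
  classical
  set SS : P → Submodule R F.carrier := fun p' =>
    ⨅ η' : Λ, Submodule.comap (crd F bb η') (Submodule.span R {tp P R (p' - d η')}) with hSS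
  have memSS : ∀ (p' : P) (w : F.carrier), w ∈ SS p' ↔
      ∀ η', ∃ r : R, bb.repr w η' = r • tp P R (p' - d η') := by
    intro p' w
    simp only [hSS, Submodule.mem_iInf, Submodule.mem_comap, crd_apply,
      Submodule.mem_span_singleton]
    exact ⟨fun h η' => (h η').imp (fun r hr => hr.symm),
           fun h η' => (h η').imp (fun r hr => hr.symm)⟩
  suffices h : F.deg p ≤ SS p by exact (memSS p v).mp (h hv) η
  clear hv v η
  intro v hv
  set c := bb.repr v with hc
  -- basic sum representation
  have hrepr : v = ∑ η ∈ c.support, c η • bb η := by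
    conv_lhs => rw [← bb.linearCombination_repr v]
    rw [Finsupp.linearCombination_apply, Finsupp.sum]
  -- expand each coefficient into monomials
  have hrepr2 : v = ∑ j ∈ c.support.sigma (fun η => (c η).coeff.support),
      (AddMonoidAlgebra.single j.2 ((c j.1).coeff j.2)) • bb j.1 := by
    rw [Finset.sum_sigma]
    rw [hrepr]
    refine Finset.sum_congr rfl (fun η _ => ?_)
    have h1 : c η = ∑ s ∈ (c η).coeff.support, AddMonoidAlgebra.single s ((c η).coeff s) := by
      conv_lhs => rw [← AddMonoidAlgebra.sum_coeff_single (c η)]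
      rfl
    calc c η • bb η
        = (∑ s ∈ (c η).coeff.support, AddMonoidAlgebra.single s ((c η).coeff s)) • bb η := by rw [← h1]
      _ = ∑ s ∈ (c η).coeff.support, AddMonoidAlgebra.single s ((c η).coeff s) • bb η := Finset.sum_smul
  set J := c.support.sigma (fun η => (c η).coeff.support) with hJ
  set term : (_ : Λ) × ↥(AddSubmonoid.nonneg P) → F.carrier :=
    fun j => (AddMonoidAlgebra.single j.2 ((c j.1).coeff j.2)) • bb j.1 with hterm
  have hterm' : ∀ j, term j = ((c j.1).coeff j.2) • (tp P R j.2.1 • bb j.1) := by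
    intro j
    rw [hterm]
    simp only
    rw [tp_single, smul_assoc]
  have htermdeg : ∀ j, term j ∈ F.deg (d j.1 + j.2.1) := by
    intro j
    rw [hterm' j]
    exact Submodule.smul_mem _ _
      (F.tp_smul_mem j.2.1 (AddSubmonoid.mem_nonneg.mp j.2.2) _ _ (hb j.1))
  have htermSS : ∀ j, term j ∈ SS (d j.1 + j.2.1) := by
    intro j
    rw [hterm' j]
    refine Submodule.smul_mem _ _ ?_
    rw [memSS]
    intro η'
    have : bb.repr (tp P R j.2.1 • bb j.1) = tp P R j.2.1 • bb.repr (bb j.1) :=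
      LinearEquiv.map_smul _ _ _
    rw [this, bb.repr_self, Finsupp.smul_apply, Finsupp.single_apply]
    by_cases hee : j.1 = η'
    · subst hee
      refine ⟨1, ?_⟩
      rw [if_pos rfl, smul_eq_mul, mul_one, one_smul, add_sub_cancel_left]
    · exact ⟨0, by rw [if_neg hee, smul_zero, zero_smul]⟩
  -- split the sum
  have hsplit := Finset.sum_filter_add_sum_filter_not J (fun j => d j.1 + j.2.1 = p) term
  set A := ∑ j ∈ J.filter (fun j => d j.1 + j.2.1 = p), term j with hA
  set B := ∑ j ∈ J.filter (fun j => ¬ d j.1 + j.2.1 = p), term j with hB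
  have hABv : A + B = v := by rw [hA, hB, hsplit, ← hrepr2]
  have hASS : A ∈ SS p := by
    refine Submodule.sum_mem _ (fun j hj => ?_)
    have := (Finset.mem_filter.mp hj).2
    simpa [this] using htermSS j
  have hAdeg : A ∈ F.deg p := by
    refine Submodule.sum_mem _ (fun j hj => ?_)
    have := (Finset.mem_filter.mp hj).2
    simpa [this] using htermdeg j
  have hBmem : B ∈ ⨆ p' ∈ {p' : P | p' ≠ p}, F.deg p' := by
    refine Submodule.sum_mem _ (fun j hj => ?_)
    have hne := (Finset.mem_filter.mp hj).2
    refine Submodule.mem_iSup_of_mem (d j.1 + j.2.1) ?_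
    refine Submodule.mem_iSup_of_mem hne ?_
    exact htermdeg j
  have hdisj : Disjoint (F.deg p) (⨆ p' ∈ {p' : P | p' ≠ p}, F.deg p') :=
    (F.isInternal.submodule_iSupIndep).disjoint_biSup (by simp)
  have hvA : v - A = B := by rw [← hABv]; abel
  have hzero : v - A = 0 := by
    refine (Submodule.disjoint_def.mp hdisj) _ (Submodule.sub_mem _ hv hAdeg) ?_
    rw [hvA]; exact hBmem
  have : v = A := by
    have := sub_eq_zero.mp hzero
    exact this
  rw [this]; exact hASS

end DecompAux2

namespace DecompAux
set_option linter.unusedSectionVars false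

variable {P : Type} [AddCommGroup P] [Preorder P]
  [CovariantClass P P (· + ·) (· ≤ ·)] [DecidableEq P]
variable {R : Type} [CommRing R]

theorem max_dominator (s : Finset P) (a : P) (ha : a ∈ s) :
    ∃ m, m ∈ s ∧ a ≤ m ∧ ∀ b ∈ s, ¬ m < b := by
  classical
  obtain ⟨m, hm, hmax⟩ : ∃ m ∈ s.filter (fun b => a ≤ b), ∀ b ∈ s.filter (fun b => a ≤ b), ¬ m < b := by
    obtain ⟨m, hm, hmax'⟩ := Finset.exists_maximal (s := s.filter (fun b => a ≤ b))
      ⟨a, Finset.mem_filter.mpr ⟨ha, le_rfl⟩⟩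
    exact ⟨m, hm, fun b hb hlt => (lt_iff_le_not_ge.mp hlt).2 (hmax' hb hlt.le)⟩
  have hms := (Finset.mem_filter.mp hm).1
  have ham := (Finset.mem_filter.mp hm).2
  refine ⟨m, hms, ham, fun b hb hlt => ?_⟩
  exact hmax b (Finset.mem_filter.mpr ⟨hb, le_trans ham hlt.le⟩) hlt

theorem sum_fin_list_map {α β : Type} [AddCommMonoid β] (L : List α) (f : α → β) :
    ∑ t : Fin L.length, f (L.get t) = (L.map f).sum := by
  induction L with
  | nil => simp
  | cons hd tl ih =>
    rw [List.map_cons, List.sum_cons, ← ih]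
    have h := Fin.sum_univ_succ (n := tl.length) (fun t : Fin (tl.length + 1) => f ((hd :: tl).get t))
    exact h

end DecompAux

open DecompAux DecompAux2

/-- In a graded projective module, any decomposable homogeneous element can be written in
terms of indecomposable elements. -/
theorem decomposable_eq_sum_indecomposables [IsDomain R] [IsPrincipalIdealRing R]
    (M : PersMod P R) (hproj : IsGradedProjective P R M)
    (k : P) (x : M.carrier) (hx : x ∈ Dsub P R M k) :
    ∃ (m : ℕ) (ℓ : Fin m → P) (z : Fin m → M.carrier),
      (∀ t, ℓ t < k) ∧ (∀ t, z t ∈ M.deg (ℓ t)) ∧ (∀ t, z t ∉ Dsub P R M (ℓ t)) ∧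
      x = ∑ t, tp P R (k - ℓ t) • z t := by
  classical
  obtain ⟨F, ⟨Λ, d, bb, hb⟩, ι, π, hι, hπ, hπι⟩ := hproj
  have hπι' : ∀ w : M.carrier, π (ι w) = w := by
    intro w
    have := DFunLike.congr_fun hπι w
    simpa using this
  set f : P × M.carrier → M.carrier := fun pz => tp P R (k - pz.1) • pz.2 with hf
  set G : M.carrier → Prop := fun g => ∃ L : List (P × M.carrier),
      (∀ pz ∈ L, pz.1 < k ∧ pz.2 ∈ M.deg pz.1 ∧ pz.2 ∉ Dsub P R M pz.1) ∧
      g = (L.map f).sum with hG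
  have G0 : G 0 := ⟨[], by intro pz hpz; simp at hpz, by simp⟩
  have Gadd : ∀ a b, G a → G b → G (a + b) := by
    rintro a b ⟨L₁, h₁, rfl⟩ ⟨L₂, h₂, rfl⟩
    refine ⟨L₁ ++ L₂, ?_, ?_⟩
    · intro pz hpz
      rcases List.mem_append.mp hpz with h | h
      exacts [h₁ _ h, h₂ _ h]
    · rw [List.map_append, List.sum_append]
  have smul_swap : ∀ (r : R) (a : PersAlg P R) (w : M.carrier),
      r • (a • w) = a • (r • w) := by
    intro r a w
    rw [← smul_assoc, Algebra.smul_def, mul_comm, mul_smul, algebraMap_smul]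
  have absorb : ∀ (ℓ : P) (z w : M.carrier), ℓ < k → z ∈ M.deg ℓ → w ∈ M.deg ℓ →
      w ∉ Dsub P R M ℓ → G (tp P R (k - ℓ) • z) := by
    intro ℓ z w hℓ hz hw hwD
    by_cases hzD : z ∈ Dsub P R M ℓ
    · refine ⟨[(ℓ, z + w), (ℓ, -w)], ?_, ?_⟩
      · intro pz hpz
        rcases List.mem_cons.mp hpz with h | h
        · subst h
          refine ⟨hℓ, Submodule.add_mem _ hz hw, fun hD => hwD ?_⟩
          have := Submodule.sub_mem _ hD hzD
          simpa using this
        · rcases List.mem_singleton.mp h with h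
          subst h
          refine ⟨hℓ, Submodule.neg_mem _ hw, fun hD => hwD ?_⟩
          have := Submodule.neg_mem _ hD
          simpa using this
      · show tp P R (k - ℓ) • z = _
        simp only [List.map_cons, List.map_nil, List.sum_cons, List.sum_nil, add_zero, hf]
        rw [← smul_add, add_neg_cancel_right]
    · exact ⟨[(ℓ, z)], by
        intro pz hpz
        rcases List.mem_singleton.mp hpz with h
        subst h
        exact ⟨hℓ, hz, hzD⟩, by
        show tp P R (k - ℓ) • z = _
        simp [hf]⟩
  have Gsmul_list : ∀ (L : List (P × M.carrier)),
      (∀ pz ∈ L, pz.1 < k ∧ pz.2 ∈ M.deg pz.1 ∧ pz.2 ∉ Dsub P R M pz.1) →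
      ∀ r : R, G (r • (L.map f).sum) := by
    intro L
    induction L with
    | nil => intro _ r; simpa using G0
    | cons hd tl ih =>
      intro hL r
      have hhd := hL hd (List.mem_cons_self)
      have htl := fun pz hpz => hL pz (List.mem_cons_of_mem hd hpz)
      rw [List.map_cons, List.sum_cons, smul_add]
      refine Gadd _ _ ?_ (ih htl r)
      have heq : r • f hd = tp P R (k - hd.1) • (r • hd.2) := smul_swap r _ hd.2
      rw [heq]
      exact absorb hd.1 (r • hd.2) hd.2 hhd.1 (Submodule.smul_mem _ _ hhd.2.1)
        hhd.2.1 hhd.2.2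
  have Gsmul : ∀ (r : R) (a : M.carrier), G a → G (r • a) := by
    rintro r a ⟨L, hL, rfl⟩
    exact Gsmul_list L hL r
  -- the main generator lemma
  have gen : ∀ (q : P), q < k → ∀ y ∈ M.deg q, G (tp P R (k - q) • y) := by
    intro q hq y hy
    have hkq : (0:P) ≤ k - q := DecompAux.sub_nonneg_of_le hq.le
    set v := ι y with hv
    set c := bb.repr v with hc
    have hvdeg : v ∈ F.deg q := hι q y hy
    have hcoord : ∀ η, ∃ r : R, c η = r • tp P R (q - d η) := fun η =>
      coord_homog F bb d hb hvdeg η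
    have hdle : ∀ η ∈ c.support, d η ≤ q := by
      intro η hη
      obtain ⟨r, hr⟩ := hcoord η
      by_contra hcon
      have h0 : ¬ (0:P) ≤ q - d η := fun h => hcon (DecompAux.le_of_sub_nonneg h)
      have : c η = 0 := by rw [hr, tp_of_not_nonneg h0, smul_zero]
      exact (Finsupp.mem_support_iff.mp hη) this
    set DT := c.support.image d with hDT
    -- the basic representation identity
    have hrepr : v = ∑ η ∈ c.support, c η • bb η := by
      conv_lhs => rw [← bb.linearCombination_repr v]
      rw [Finsupp.linearCombination_apply, Finsupp.sum]
    -- witnesses of indecomposability at maximal support degrees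
    have witness : ∀ mp, mp ∈ DT → (∀ p' ∈ DT, ¬ mp < p') →
        ∃ w : M.carrier, w ∈ M.deg mp ∧ w ∉ Dsub P R M mp := by
      intro mp hmp hmax
      obtain ⟨ηs, hηs, hdηs⟩ := Finset.mem_image.mp hmp
      subst hdηs
      have hkey : c = ∑ η ∈ c.support, c η • bb.repr (ι (π (bb η))) := by
        have h2 : ι (π v) = v := by rw [hv, hπι' y]
        calc c = bb.repr v := hc
          _ = bb.repr (ι (π v)) := by rw [h2]
          _ = bb.repr (ι (π (∑ η ∈ c.support, c η • bb η))) := by rw [← hrepr]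
          _ = ∑ η ∈ c.support, c η • bb.repr (ι (π (bb η))) := by
              rw [map_sum, map_sum, map_sum]
              simp only [map_smul]
      have hcs : c ηs ≠ 0 := Finsupp.mem_support_iff.mp hηs
      have hsum : c ηs = ∑ η ∈ c.support, c η * (bb.repr (ι (π (bb η))) ηs) := by
        conv_lhs => rw [hkey]
        rw [Finsupp.finset_sum_apply]
        refine Finset.sum_congr rfl (fun η _ => ?_)
        rw [Finsupp.smul_apply, smul_eq_mul]
      have hne : ∑ η ∈ c.support, c η * (bb.repr (ι (π (bb η))) ηs) ≠ 0 := by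
        rw [← hsum]; exact hcs
      obtain ⟨η₀, hη₀mem, hη₀⟩ := Finset.exists_ne_zero_of_sum_ne_zero hne
      have hγne : bb.repr (ι (π (bb η₀))) ηs ≠ 0 := fun h => hη₀ (by rw [h, mul_zero])
      have hγdeg : ι (π (bb η₀)) ∈ F.deg (d η₀) := hι _ _ (hπ _ _ (hb η₀))
      obtain ⟨r', hr'⟩ := coord_homog F bb d hb hγdeg ηs
      have hr'ne : r' ≠ 0 := fun h => hγne (by rw [hr', h, zero_smul])
      have h0le : (0:P) ≤ d η₀ - d ηs := by
        by_contra hcon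
        exact hγne (by rw [hr', tp_of_not_nonneg hcon, smul_zero])
      have hlee : d ηs ≤ d η₀ := DecompAux.le_of_sub_nonneg h0le
      have hgee : d η₀ ≤ d ηs := by
        by_contra hcon
        refine hmax (d η₀) (Finset.mem_image_of_mem d hη₀mem) ?_
        exact lt_iff_le_not_ge.mpr ⟨hlee, hcon⟩
      have hδ : (0:P) ≤ d ηs - d η₀ := DecompAux.sub_nonneg_of_le hgee
      refine ⟨tp P R (d ηs - d η₀) • π (bb η₀), ?_, ?_⟩
      · have hmem := M.tp_smul_mem _ hδ _ _ (hπ _ _ (hb η₀))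
        have harith : d η₀ + (d ηs - d η₀) = d ηs := by abel
        rwa [harith] at hmem
      · intro hmem
        set Φ : M.carrier →ₗ[R] PersAlg P R :=
          (((Finsupp.lapply ηs).comp bb.repr.toLinearMap).comp ι).restrictScalars R with hΦ
        have hΦap : ∀ w : M.carrier, Φ w = bb.repr (ι w) ηs := fun w => rfl
        have hker : Dsub P R M (d ηs) ≤ LinearMap.ker Φ := by
          rw [Dsub]
          refine iSup_le (fun qq => ?_)
          rintro w ⟨u, hu, rfl⟩
          have hw : smulMapR P R M (tp P R (d ηs - qq.1)) u = tp P R (d ηs - qq.1) • u := rfl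
          obtain ⟨r'', hr''⟩ := coord_homog F bb d hb (hι _ _ hu) ηs
          have hnot : ¬ (0:P) ≤ qq.1 - d ηs := by
            intro hcon
            have h1 : d ηs ≤ qq.1 := DecompAux.le_of_sub_nonneg hcon
            have hlt : qq.1 < d ηs := qq.2
            exact (lt_iff_le_not_ge.mp hlt).2 h1
          rw [LinearMap.mem_ker, hw, hΦap]
          simp only [map_smul]
          rw [Finsupp.smul_apply, smul_eq_mul, hr'', tp_of_not_nonneg hnot, smul_zero,
            mul_zero]
        have hΦw : Φ (tp P R (d ηs - d η₀) • π (bb η₀)) = r' • (1 : PersAlg P R) := by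
          rw [hΦap]
          simp only [map_smul]
          rw [Finsupp.smul_apply, smul_eq_mul, hr', mul_smul_comm, tp_mul hδ h0le]
          have harith : (d ηs - d η₀) + (d η₀ - d ηs) = 0 := by abel
          rw [harith, tp_zero]
        have hzero : Φ (tp P R (d ηs - d η₀) • π (bb η₀)) = 0 := hker hmem
        rw [hΦw] at hzero
        apply hr'ne
        have h1 : (r' • (1:PersAlg P R)) = AddMonoidAlgebra.single (0 : ↥(AddSubmonoid.nonneg P)) r' := by
          rw [AddMonoidAlgebra.one_def, AddMonoidAlgebra.smul_single', mul_one]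
        rw [h1] at hzero
        exact AddMonoidAlgebra.single_eq_zero.mp hzero
    -- decompose the element and finish
    have hysum : y = ∑ η ∈ c.support, c η • π (bb η) := by
      calc y = π v := (hπι' y).symm
        _ = ∑ η ∈ c.support, c η • π (bb η) := by
            rw [hrepr, map_sum]
            simp only [map_smul]
    rw [hysum, Finset.smul_sum]
    refine Finset.sum_induction _ G Gadd G0 (fun η hη => ?_)
    obtain ⟨rη, hrη⟩ := hcoord η
    have hdq : d η ≤ q := hdle η hη
    have hqd : (0:P) ≤ q - d η := DecompAux.sub_nonneg_of_le hdq
    obtain ⟨mp, hmpmem, hmpge, hmpmax⟩ := max_dominator DT (d η) (Finset.mem_image_of_mem d hη)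
    obtain ⟨w, hwdeg, hwD⟩ := witness mp hmpmem hmpmax
    have hmpq : mp ≤ q := by
      obtain ⟨η', hη', hdη'⟩ := Finset.mem_image.mp hmpmem
      rw [← hdη']
      exact hdle η' hη'
    have hmpk : mp < k := lt_of_le_of_lt hmpq hq
    have hkmp : (0:P) ≤ k - mp := DecompAux.sub_nonneg_of_le hmpk.le
    have hmpd : (0:P) ≤ mp - d η := DecompAux.sub_nonneg_of_le hmpge
    have hterm : tp P R (k - q) • (c η • π (bb η)) =
        tp P R (k - mp) • (rη • (tp P R (mp - d η) • π (bb η))) := by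
      have hL : tp P R (k - q) • (c η • π (bb η)) = rη • (tp P R (k - d η) • π (bb η)) := by
        rw [hrη, smul_assoc, ← smul_swap, ← mul_smul, tp_mul hkq hqd, sub_add_sub_cancel]
      have hR : tp P R (k - mp) • (rη • (tp P R (mp - d η) • π (bb η))) =
          rη • (tp P R (k - d η) • π (bb η)) := by
        rw [← smul_swap, ← mul_smul, tp_mul hkmp hmpd, sub_add_sub_cancel]
      rw [hL, hR]
    rw [hterm]
    have hz1 : tp P R (mp - d η) • π (bb η) ∈ M.deg mp := by
      have hmem := M.tp_smul_mem _ hmpd _ _ (hπ _ _ (hb η))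
      have harith : d η + (mp - d η) = mp := by abel
      rwa [harith] at hmem
    exact absorb mp _ w hmpk (Submodule.smul_mem _ _ hz1) hwdeg hwD
  -- conclude from hx by span induction
  have hGx : G x := by
    rw [Dsub, Submodule.iSup_eq_span] at hx
    refine Submodule.span_induction (p := fun g _ => G g) ?_ G0
      (fun a b _ _ ha hb => Gadd a b ha hb) (fun r a _ ha => Gsmul r a ha) hx
    intro g hg
    obtain ⟨s, ⟨qq, rfl⟩, hgmem⟩ := hg
    obtain ⟨u, hu, rfl⟩ := hgmem
    have heq : smulMapR P R M (tp P R (k - qq.1)) u = tp P R (k - qq.1) • u := rfl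
    rw [heq]
    exact gen qq.1 qq.2 u hu
  obtain ⟨L, hL, hsum⟩ := hGx
  refine ⟨L.length, fun t => (L.get t).1, fun t => (L.get t).2, ?_, ?_, ?_, ?_⟩
  · intro t; exact (hL _ (List.get_mem L t)).1
  · intro t; exact (hL _ (List.get_mem L t)).2.1
  · intro t; exact (hL _ (List.get_mem L t)).2.2
  · rw [hsum, ← sum_fin_list_map L f]
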